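/- arXiv:1311.1298 — 2 statements merged into one kernel-verified Lean document; each statement's English description precedes it below -/
import Mathlib

section
/- With G and G' as in the MCC reduction (base vertices V with distinct colors; for each non-adjacent pair {u,v} two additional vertices u_v, v_u sharing a fresh color, with edges (u,u_v) and (v,v_u)): if there exists a subset E''⊆E' such that every connected component of (V', E'∖E'') is colorful and the number of components is k, then V admits a partition into at most k cliques of G. -/
open scoped Classical

/-- Vertex set of the MCC reduction graph: base vertices plus, for each ordered
pair `(u,v)` of distinct non-adjacent vertices, an additional vertex `u_v`. -/
def mccVert {V : Type*} (G : SimpleGraph V) : Type _ :=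
  V ⊕ {p : V × V // p.1 ≠ p.2 ∧ ¬ G.Adj p.1 p.2}

/-- Coloring of the MCC reduction graph: each base vertex gets its own color;
the additional vertices `u_v` and `v_u` share the color `s(u,v)`. -/
def mccColor {V : Type*} (G : SimpleGraph V) : mccVert G → V ⊕ Sym2 V
  | Sum.inl u => Sum.inl u
  | Sum.inr p => Sum.inr (Sym2.mk p.val.1 p.val.2)

/-- Edges of the MCC reduction graph: the base edges of `G`, plus an edge from
each additional vertex `u_v` to the base vertex `u`. -/
def mccGraph {V : Type*} (G : SimpleGraph V) : SimpleGraph (mccVert G) :=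
  SimpleGraph.fromRel (fun x y =>
    match x, y with
    | Sum.inl u, Sum.inl w => G.Adj u w
    | Sum.inl u, Sum.inr p => p.val.1 = u
    | _, _ => False)


lemma mcc_isolated {V : Type*} (G : SimpleGraph V) (H : SimpleGraph (mccVert G))
    (hH : H ≤ mccGraph G) (p : {p : V × V // p.1 ≠ p.2 ∧ ¬ G.Adj p.1 p.2})
    (hp : ¬ H.Adj (Sum.inl p.val.1) (Sum.inr p)) :
    ∀ y, H.Reachable (Sum.inr p) y → y = Sum.inr p := by
  intro y hr
  obtain ⟨w⟩ := hr
  cases w with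
  | nil => rfl
  | @cons _ b _ h w' =>
    exfalso
    have hm := hH h
    replace hm := (SimpleGraph.fromRel_adj ..).1 hm
    obtain ⟨hne, h1 | h2⟩ := hm
    · exact h1
    · cases b with
      | inl u =>
        have : p.val.1 = u := h2
        subst this
        exact hp h.symm
      | inr q => exact h2

/-- If some subgraph of the MCC reduction graph has all components colorful and
exactly `k` connected components, then `G` can be partitioned into at most `k`
cliques. -/
theorem stmt7 {V : Type*} [Fintype V] [DecidableEq V] (G : SimpleGraph V)
    (H : SimpleGraph (mccVert G)) (hH : H ≤ mccGraph G)
    (hcol : ∀ x y : mccVert G, H.Reachable x y → mccColor G x = mccColor G y → x = y)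
    (k : ℕ) (hk : Nat.card H.ConnectedComponent = k) :
    ∃ P : V → Fin k, ∀ u v : V, P u = P v → u ≠ v → G.Adj u v := by
  classical
  have finV : Finite (mccVert G) := by unfold mccVert; infer_instance
  have finC : Finite H.ConnectedComponent := Quot.finite _
  let e : H.ConnectedComponent ≃ Fin k := Finite.equivFinOfCardEq hk
  -- key: for a nonadjacent same-component pair, one of the two leaf edges is missing
  have key : ∀ (u v : V) (h : u ≠ v ∧ ¬ G.Adj u v),
      H.connectedComponentMk (Sum.inl u) = H.connectedComponentMk (Sum.inl v) →
      ¬ H.Adj (Sum.inl u) (Sum.inr ⟨(u, v), h⟩) ∨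
      ¬ H.Adj (Sum.inl v) (Sum.inr ⟨(v, u), ⟨h.1.symm, fun a => h.2 a.symm⟩⟩) := by
    intro u v h hc
    by_contra hcon
    push_neg at hcon
    obtain ⟨h1, h2⟩ := hcon
    have hr : H.Reachable (Sum.inr ⟨(u, v), h⟩)
        (Sum.inr ⟨(v, u), ⟨h.1.symm, fun a => h.2 a.symm⟩⟩) := by
      have r1 : H.Reachable (Sum.inl u) (Sum.inl v) :=
        (SimpleGraph.ConnectedComponent.eq).mp hc
      exact (h1.symm.reachable.trans r1).trans h2.reachable
    have hcq := hcol _ _ hr (by simp [mccColor, Sym2.eq_swap])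
    have := congrArg (fun x : mccVert G => match x with
      | Sum.inl w => w
      | Sum.inr p => p.val.1) hcq
    exact h.1 this
  -- witness predicate
  let W : V → Prop := fun u => ∃ p : {p : V × V // p.1 ≠ p.2 ∧ ¬ G.Adj p.1 p.2},
    p.val.1 = u ∧
    H.connectedComponentMk (Sum.inl p.val.1) = H.connectedComponentMk (Sum.inl p.val.2) ∧
    ¬ H.Adj (Sum.inl u) (Sum.inr p)
  let P : V → H.ConnectedComponent := fun u =>
    if h : W u then H.connectedComponentMk (Sum.inr h.choose)
    else H.connectedComponentMk (Sum.inl u)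
  have hmain : ∀ u v : V, u ≠ v → ¬ G.Adj u v → P u ≠ P v := by
    intro u v huv hadj hPeq
    by_cases hu : W u
    · obtain ⟨hp1, hp2, hp3⟩ := hu.choose_spec
      have hiso := mcc_isolated G H hH hu.choose (by rw [hp1]; exact hp3)
      by_cases hv : W v
      · obtain ⟨hq1, hq2, hq3⟩ := hv.choose_spec
        have hPu : P u = H.connectedComponentMk (Sum.inr hu.choose) := dif_pos hu
        have hPv : P v = H.connectedComponentMk (Sum.inr hv.choose) := dif_pos hv
        rw [hPu, hPv] at hPeq
        have := hiso _ ((SimpleGraph.ConnectedComponent.eq).mp hPeq)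
        have heq : hv.choose = hu.choose := by
          exact Sum.inr.inj this
        exact huv (hp1 ▸ hq1 ▸ congrArg (fun p => p.val.1) heq.symm)
      · have hPu : P u = H.connectedComponentMk (Sum.inr hu.choose) := dif_pos hu
        have hPv : P v = H.connectedComponentMk (Sum.inl v) := dif_neg hv
        rw [hPu, hPv] at hPeq
        have := hiso _ ((SimpleGraph.ConnectedComponent.eq).mp hPeq)
        simp at this
    · by_cases hv : W v
      · obtain ⟨hq1, hq2, hq3⟩ := hv.choose_spec
        have hiso := mcc_isolated G H hH hv.choose (by rw [hq1]; exact hq3)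
        have hPu : P u = H.connectedComponentMk (Sum.inl u) := dif_neg hu
        have hPv : P v = H.connectedComponentMk (Sum.inr hv.choose) := dif_pos hv
        rw [hPu, hPv] at hPeq
        have := hiso _ ((SimpleGraph.ConnectedComponent.eq).mp hPeq.symm)
        simp at this
      · have hPu : P u = H.connectedComponentMk (Sum.inl u) := dif_neg hu
        have hPv : P v = H.connectedComponentMk (Sum.inl v) := dif_neg hv
        rw [hPu, hPv] at hPeq
        rcases key u v ⟨huv, hadj⟩ hPeq with h1 | h2
        · exact hu ⟨⟨(u, v), ⟨huv, hadj⟩⟩, rfl, hPeq, h1⟩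
        · exact hv ⟨⟨(v, u), ⟨huv.symm, fun a => hadj a.symm⟩⟩, rfl, hPeq.symm, h2⟩
  refine ⟨fun u => e (P u), fun u v hPe hne => ?_⟩
  by_contra hadj
  exact hmain u v hne hadj (e.injective hPe)
end

section
/- With G and G' as in the MCC reduction, the minimum number of cliques in a clique partition of G equals the minimum, over all subsets E''⊆E' such that every connected component of (V', E'∖E'') is colorful, of the number of connected components of (V', E'∖E''). -/
open scoped Classical

instance mccVert.finite {V : Type*} [Finite V] (G : SimpleGraph V) :
    Finite (mccVert G) := by
  unfold mccVert; infer_instance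

private lemma reach_eq {α β : Type*} {H : SimpleGraph α} {f : α → β}
    (h : ∀ x y, H.Adj x y → f x = f y) {x y : α} (hr : H.Reachable x y) :
    f x = f y := by
  obtain ⟨w⟩ := hr
  induction w with
  | nil => rfl
  | cons ha _ ih => exact (h _ _ ha).trans ih

private lemma isolated_reach {α : Type*} {H : SimpleGraph α} {x y : α}
    (h : ∀ z, ¬ H.Adj x z) (hr : H.Reachable x y) : x = y := by
  obtain ⟨w⟩ := hr
  cases w with
  | nil => rfl
  | cons ha _ => exact absurd ha (h _)

/-- The only possible neighbor of a pendant vertex is its base vertex. -/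
private lemma pendant_nbr {V : Type*} {G : SimpleGraph V}
    {H : SimpleGraph (mccVert G)} (hle : H ≤ mccGraph G)
    {p : {p : V × V // p.1 ≠ p.2 ∧ ¬ G.Adj p.1 p.2}} {y : mccVert G}
    (h : H.Adj (Sum.inr p) y) : y = Sum.inl p.val.1 := by
  have h' := hle h
  replace h' := (SimpleGraph.fromRel_adj _ _ _).mp h'
  cases y with
  | inl w =>
    obtain ⟨-, h1 | h2⟩ := h'
    · exact h1.elim
    · exact congrArg Sum.inl h2.symm
  | inr q =>
    obtain ⟨-, h1 | h2⟩ := h'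
    · exact h1.elim
    · exact h2.elim

/-- The "phi" map sending every vertex of the reduction graph to the clique
class of its underlying base vertex. -/
private def phiMap {V : Type*} (G : SimpleGraph V) {k : ℕ} (P : V → Fin k) :
    mccVert G → Fin k :=
  Sum.elim P (fun p => P p.val.1)

/-- The subgraph of the reduction graph keeping only edges within a phi class. -/
private def cliqueH {V : Type*} (G : SimpleGraph V) {k : ℕ} (P : V → Fin k) :
    SimpleGraph (mccVert G) :=
  mccGraph G ⊓ SimpleGraph.fromRel (fun x y => phiMap G P x = phiMap G P y)

private lemma key1 {V : Type*} [Fintype V] [DecidableEq V] (G : SimpleGraph V)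
    (k : ℕ) (P : V → Fin k) (hP : ∀ u v : V, P u = P v → u ≠ v → G.Adj u v) :
    ∃ n : ℕ, (∃ H : SimpleGraph (mccVert G), H ≤ mccGraph G ∧
        (∀ x y : mccVert G, H.Reachable x y → mccColor G x = mccColor G y → x = y) ∧
        Nat.card H.ConnectedComponent = n) ∧ n ≤ k := by
  classical
  set H : SimpleGraph (mccVert G) := cliqueH G P with hHdef
  have hle : H ≤ mccGraph G := inf_le_left
  have hadjΦ : ∀ x y, H.Adj x y → phiMap G P x = phiMap G P y := by
    intro x y h
    have h2 := h.2
    rw [SimpleGraph.fromRel_adj] at h2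
    rcases h2.2 with h3 | h3
    · exact h3
    · exact h3.symm
  have hcol : ∀ x y : mccVert G, H.Reachable x y →
      mccColor G x = mccColor G y → x = y := by
    intro x y hr hc
    cases x with
    | inl u =>
      cases y with
      | inl w =>
        simp only [mccColor, Sum.inl.injEq] at hc
        exact congrArg Sum.inl hc
      | inr p => simp [mccColor] at hc
    | inr p =>
      cases y with
      | inl w => simp [mccColor] at hc
      | inr q =>
        simp only [mccColor, Sum.inr.injEq, Sym2.mk_eq_mk_iff] at hc
        rcases hc with hc | hc
        · exact congrArg Sum.inr (Subtype.ext hc)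
        · have hΦ := reach_eq hadjΦ hr
          have h1 : p.val.1 = q.val.2 := by rw [hc]; rfl
          have h2 : P q.val.1 = P q.val.2 := by
            have : phiMap G P (Sum.inr p) = P p.val.1 := rfl
            rw [this] at hΦ
            exact (h1 ▸ hΦ : P q.val.2 = phiMap G P (Sum.inr q)).symm
          exact absurd (hP _ _ h2 q.prop.1) q.prop.2
  have hpend : ∀ p : {p : V × V // p.1 ≠ p.2 ∧ ¬ G.Adj p.1 p.2},
      H.Adj (Sum.inl p.val.1) (Sum.inr p) := by
    intro p
    refine ⟨?_, ?_⟩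
    · refine (SimpleGraph.fromRel_adj _ _ _).mpr ?_
      exact ⟨Sum.inl_ne_inr, Or.inl rfl⟩
    · refine (SimpleGraph.fromRel_adj _ _ _).mpr ?_
      exact ⟨Sum.inl_ne_inr, Or.inl rfl⟩
  have hbaseadj : ∀ u w : V, u ≠ w → P u = P w → H.Adj (Sum.inl u) (Sum.inl w) := by
    intro u w hne hPeq
    refine ⟨?_, ?_⟩
    · refine (SimpleGraph.fromRel_adj _ _ _).mpr ?_
      exact ⟨fun hh => hne (Sum.inl.inj hh), Or.inl (hP u w hPeq hne)⟩
    · refine (SimpleGraph.fromRel_adj _ _ _).mpr ?_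
      exact ⟨fun hh => hne (Sum.inl.inj hh), Or.inl hPeq⟩
  have hrep : ∀ x : mccVert G, ∃ u : V,
      H.connectedComponentMk x = H.connectedComponentMk (Sum.inl u) ∧
        phiMap G P x = P u := by
    intro x
    cases x with
    | inl u => exact ⟨u, rfl, rfl⟩
    | inr p =>
      exact ⟨p.val.1, SimpleGraph.ConnectedComponent.sound (hpend p).symm.reachable, rfl⟩
  let g : H.ConnectedComponent → Fin k :=
    SimpleGraph.ConnectedComponent.lift (phiMap G P)
      (fun v w q _ => reach_eq hadjΦ ⟨q⟩)
  have hinj : Function.Injective g := by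
    intro c d hcd
    obtain ⟨x, rfl⟩ := c.exists_rep
    obtain ⟨y, rfl⟩ := d.exists_rep
    obtain ⟨u, hu, hΦu⟩ := hrep x
    obtain ⟨w, hw, hΦw⟩ := hrep y
    have hPuw : P u = P w := by
      rw [← hΦu, ← hΦw]
      exact hcd
    show H.connectedComponentMk x = H.connectedComponentMk y
    by_cases huw : u = w
    · rw [hu, hw, huw]
    · rw [hu, hw]
      exact SimpleGraph.ConnectedComponent.sound (hbaseadj u w huw hPuw).reachable
  refine ⟨Nat.card H.ConnectedComponent, ⟨H, hle, hcol, rfl⟩, ?_⟩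
  have := Nat.card_le_card_of_injective g hinj
  simpa [Nat.card_eq_fintype_card] using this

/-- For a vertex `u`, either it has a detached pendant witness (then send it to
the pendant's component), or send it to its own component. -/
private noncomputable def badMap {V : Type*} (G : SimpleGraph V)
    (H : SimpleGraph (mccVert G)) (u : V) : mccVert G :=
  if h : ∃ p : {p : V × V // p.1 ≠ p.2 ∧ ¬ G.Adj p.1 p.2},
      p.val.1 = u ∧ ¬ H.Adj (Sum.inl u) (Sum.inr p)
  then Sum.inr h.choose else Sum.inl u

private lemma key2 {V : Type*} [Fintype V] [DecidableEq V] (G : SimpleGraph V)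
    (n : ℕ) (H : SimpleGraph (mccVert G)) (hle : H ≤ mccGraph G)
    (hcol : ∀ x y : mccVert G, H.Reachable x y → mccColor G x = mccColor G y → x = y)
    (hcard : Nat.card H.ConnectedComponent = n) :
    ∃ P : V → Fin n, ∀ u v : V, P u = P v → u ≠ v → G.Adj u v := by
  classical
  let e : H.ConnectedComponent ≃ Fin n := (Finite.equivFin _).trans (finCongr hcard)
  refine ⟨fun u => e (H.connectedComponentMk (badMap G H u)), ?_⟩
  intro u v hPuv hne
  have hf : H.connectedComponentMk (badMap G H u)
      = H.connectedComponentMk (badMap G H v) := e.injective hPuv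
  have hiso : ∀ (w : V)
      (h : ∃ p : {p : V × V // p.1 ≠ p.2 ∧ ¬ G.Adj p.1 p.2},
        p.val.1 = w ∧ ¬ H.Adj (Sum.inl w) (Sum.inr p))
      (z : mccVert G), ¬ H.Adj (Sum.inr h.choose) z := by
    intro w h z hadj
    have hz : z = Sum.inl h.choose.val.1 := pendant_nbr hle hadj
    apply h.choose_spec.2
    have hz' : z = Sum.inl w := by rw [hz, h.choose_spec.1]
    exact (hz' ▸ hadj).symm
  by_cases hu : ∃ p : {p : V × V // p.1 ≠ p.2 ∧ ¬ G.Adj p.1 p.2},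
      p.val.1 = u ∧ ¬ H.Adj (Sum.inl u) (Sum.inr p) <;>
    by_cases hv : ∃ p : {p : V × V // p.1 ≠ p.2 ∧ ¬ G.Adj p.1 p.2},
      p.val.1 = v ∧ ¬ H.Adj (Sum.inl v) (Sum.inr p)
  · rw [show badMap G H u = Sum.inr hu.choose from dif_pos hu, show badMap G H v = Sum.inr hv.choose from dif_pos hv] at hf
    have hr := SimpleGraph.ConnectedComponent.eq.mp hf
    have h1 := isolated_reach (hiso u hu) hr
    have hpq : hu.choose = hv.choose := Sum.inr.inj h1
    have : u = v := by rw [← hu.choose_spec.1, ← hv.choose_spec.1, hpq]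
    exact absurd this hne
  · rw [show badMap G H u = Sum.inr hu.choose from dif_pos hu, show badMap G H v = Sum.inl v from dif_neg hv] at hf
    have h1 := isolated_reach (hiso u hu) (SimpleGraph.ConnectedComponent.eq.mp hf)
    exact absurd h1 Sum.inr_ne_inl
  · rw [show badMap G H u = Sum.inl u from dif_neg hu, show badMap G H v = Sum.inr hv.choose from dif_pos hv] at hf
    have h1 := isolated_reach (hiso v hv) (SimpleGraph.ConnectedComponent.eq.mp hf.symm)
    exact absurd h1 Sum.inr_ne_inl
  · rw [show badMap G H u = Sum.inl u from dif_neg hu, show badMap G H v = Sum.inl v from dif_neg hv] at hf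
    have hr := SimpleGraph.ConnectedComponent.eq.mp hf
    by_contra hadj
    set p : {p : V × V // p.1 ≠ p.2 ∧ ¬ G.Adj p.1 p.2} := ⟨(u, v), hne, hadj⟩ with hp
    set q : {p : V × V // p.1 ≠ p.2 ∧ ¬ G.Adj p.1 p.2} :=
      ⟨(v, u), Ne.symm hne, fun h => hadj h.symm⟩ with hq
    have hpu : H.Adj (Sum.inl u) (Sum.inr p) := by
      by_contra hc
      exact hu ⟨p, rfl, hc⟩
    have hqv : H.Adj (Sum.inl v) (Sum.inr q) := by
      by_contra hc
      exact hv ⟨q, rfl, hc⟩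
    have hreach : H.Reachable (Sum.inr p) (Sum.inr q) :=
      (hpu.symm.reachable.trans hr).trans hqv.reachable
    have hcolor : mccColor G (Sum.inr p) = mccColor G (Sum.inr q) := by
      simp only [mccColor]
      exact congrArg Sum.inr Sym2.eq_swap
    have h1 := hcol _ _ hreach hcolor
    have h2 : p = q := Sum.inr.inj h1
    have : u = v := congrArg (fun r => r.val.1) h2
    exact hne this

/-- The minimum number of cliques in a clique partition of `G` equals the
minimum, over all edge-deleted subgraphs of the MCC reduction graph whose
components are all colorful, of the number of connected components. -/
theorem stmt8 {V : Type*} [Fintype V] [DecidableEq V] [Nonempty V]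
    (G : SimpleGraph V) :
    sInf {k : ℕ | ∃ P : V → Fin k, ∀ u v : V, P u = P v → u ≠ v → G.Adj u v}
      = sInf {n : ℕ | ∃ H : SimpleGraph (mccVert G), H ≤ mccGraph G ∧
          (∀ x y : mccVert G, H.Reachable x y → mccColor G x = mccColor G y → x = y) ∧
          Nat.card H.ConnectedComponent = n} := by
  classical
  have hAmem : Fintype.card V ∈
      {k : ℕ | ∃ P : V → Fin k, ∀ u v : V, P u = P v → u ≠ v → G.Adj u v} :=
    ⟨fun u => Fintype.equivFin V u,
      fun u v h hne => absurd ((Fintype.equivFin V).injective h) hne⟩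
  have hkey2 : ∀ n ∈ {n : ℕ | ∃ H : SimpleGraph (mccVert G), H ≤ mccGraph G ∧
      (∀ x y : mccVert G, H.Reachable x y → mccColor G x = mccColor G y → x = y) ∧
      Nat.card H.ConnectedComponent = n},
      n ∈ {k : ℕ | ∃ P : V → Fin k, ∀ u v : V, P u = P v → u ≠ v → G.Adj u v} := by
    rintro n ⟨H, hle, hcol, hcard⟩
    exact key2 G n H hle hcol hcard
  obtain ⟨n₀, hn₀B, -⟩ := key1 G (Fintype.card V) (fun u => Fintype.equivFin V u)
    (fun u v h hne => absurd ((Fintype.equivFin V).injective h) hne)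
  apply le_antisymm
  · exact le_csInf ⟨n₀, hn₀B⟩ fun n hn => Nat.sInf_le (hkey2 n hn)
  · refine le_csInf ⟨_, hAmem⟩ fun k hk => ?_
    obtain ⟨P, hP⟩ := hk
    obtain ⟨n, hnB, hnk⟩ := key1 G k P hP
    exact le_trans (Nat.sInf_le hnB) hnk
end
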